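/- Let A be an n×n real matrix with nonnegative entries, and let u, v be n×1 real vectors with strictly positive entries such that u = A u + v. Then the maximum row-sum norm of (I - A)^{-1} is bounded by (max_ℓ u_ℓ)/(min_ℓ v_ℓ), i.e. for every row k, the sum of the entries of (I - A)^{-1} in row k is at most (max_ℓ u_ℓ)/(min_ℓ v_ℓ). -/
import Mathlib


open scoped BigOperators

theorem stmt2 {n : ℕ} (hn : 0 < n) (A : Matrix (Fin n) (Fin n) ℝ)
    (u v : Fin n → ℝ)
    (hA : ∀ i j, 0 ≤ A i j) (hu : ∀ i, 0 < u i) (hv : ∀ i, 0 < v i)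
    (huv : u = A.mulVec u + v) :
    ∀ k, ∑ l, |(1 - A)⁻¹ k l| ≤ (⨆ i, u i) / (⨅ i, v i) := by
  haveI : Nonempty (Fin n) := Fin.pos_iff_nonempty.mp hn
  have hinf_pos : 0 < ⨅ i, v i := by
    obtain ⟨j, hj⟩ := exists_eq_ciInf_of_finite (f := v)
    rw [← hj]; exact hv j
  have hsup_pos : 0 < ⨆ i, u i := by
    obtain ⟨j, hj⟩ := exists_eq_ciSup_of_finite (f := u)
    rw [← hj]; exact hu j
  have hM_pos : 0 < (⨆ i, u i) / (⨅ i, v i) := div_pos hsup_pos hinf_pos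
  -- key estimate
  have key : ∀ x y : Fin n → ℝ, (∀ l, |x l| ≤ 1) → (1 - A).mulVec y = x →
      ∀ k, |y k| ≤ (⨆ i, u i) / (⨅ i, v i) := by
    intro x y hx hxy k
    obtain ⟨k0, hk0⟩ := Finite.exists_max (fun l => |y l| / u l)
    set c := |y k0| / u k0 with hc_def
    have hc0 : 0 ≤ c := div_nonneg (abs_nonneg _) (hu k0).le
    have hyc : ∀ l, |y l| ≤ c * u l := fun l => (div_le_iff₀ (hu l)).mp (hk0 l)
    have heq : y k0 = (A.mulVec y) k0 + x k0 := by
      have h := congrFun hxy k0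
      simp only [Matrix.sub_mulVec, Matrix.one_mulVec, Pi.sub_apply] at h
      linarith
    have hAu : (A.mulVec u) k0 = u k0 - v k0 := by
      have h := congrFun huv k0
      simp only [Pi.add_apply] at h
      linarith
    have hbound : c * u k0 ≤ c * (u k0 - v k0) + 1 := by
      have h1 : c * u k0 = |y k0| := by
        rw [hc_def]; exact div_mul_cancel₀ _ (hu k0).ne'
      have h2 : |y k0| ≤ |(A.mulVec y) k0| + |x k0| := by
        rw [heq]; exact abs_add_le _ _
      have h3 : |(A.mulVec y) k0| ≤ ∑ l, A k0 l * (c * u l) := by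
        calc |(A.mulVec y) k0| = |∑ l, A k0 l * y l| := by
              simp [Matrix.mulVec, dotProduct]
          _ ≤ ∑ l, |A k0 l * y l| := Finset.abs_sum_le_sum_abs _ _
          _ ≤ ∑ l, A k0 l * (c * u l) := by
              apply Finset.sum_le_sum
              intro l _
              rw [abs_mul, abs_of_nonneg (hA k0 l)]
              exact mul_le_mul_of_nonneg_left (hyc l) (hA k0 l)
      have h4 : ∑ l, A k0 l * (c * u l) = c * (A.mulVec u) k0 := by
        simp only [Matrix.mulVec, dotProduct, Finset.mul_sum]
        exact Finset.sum_congr rfl fun l _ => by ring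
      rw [← hAu]
      calc c * u k0 = |y k0| := h1
        _ ≤ |(A.mulVec y) k0| + |x k0| := h2
        _ ≤ (∑ l, A k0 l * (c * u l)) + 1 := add_le_add h3 (hx k0)
        _ = c * (A.mulVec u) k0 + 1 := by rw [h4]
    have hcv : c * v k0 ≤ 1 := by nlinarith
    have hc_le : c ≤ 1 / (⨅ i, v i) := by
      have hvk0 : (⨅ i, v i) ≤ v k0 := ciInf_le (Finite.bddBelow_range v) k0
      rw [le_div_iff₀ hinf_pos]
      calc c * (⨅ i, v i) ≤ c * v k0 := mul_le_mul_of_nonneg_left hvk0 hc0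
        _ ≤ 1 := hcv
    have huk : u k ≤ ⨆ i, u i := le_ciSup (Finite.bddAbove_range u) k
    calc |y k| ≤ c * u k := hyc k
      _ ≤ (1 / (⨅ i, v i)) * (⨆ i, u i) := by
          apply mul_le_mul hc_le huk (hu k).le
          positivity
      _ = (⨆ i, u i) / (⨅ i, v i) := by ring
  intro k
  by_cases h : IsUnit (1 - A).det
  · set B := (1 - A)⁻¹ with hB
    set x : Fin n → ℝ := fun l => if 0 ≤ B k l then (1:ℝ) else -1 with hx_def
    have hx : ∀ l, |x l| ≤ 1 := by
      intro l
      simp only [hx_def]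
      split <;> simp
    have hxy : (1 - A).mulVec (B.mulVec x) = x := by
      rw [Matrix.mulVec_mulVec, Matrix.mul_nonsing_inv _ h, Matrix.one_mulVec]
    have hsum : ∑ l, |B k l| = (B.mulVec x) k := by
      simp only [Matrix.mulVec, dotProduct]
      apply Finset.sum_congr rfl
      intro l _
      simp only [hx_def]
      split
      · rw [abs_of_nonneg ‹_›]; ring
      · rw [abs_of_neg (lt_of_not_ge ‹_›)]; ring
    calc ∑ l, |B k l| = (B.mulVec x) k := hsum
      _ ≤ |(B.mulVec x) k| := le_abs_self _
      _ ≤ (⨆ i, u i) / (⨅ i, v i) := key x (B.mulVec x) hx hxy k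
  · rw [Matrix.nonsing_inv_apply_not_isUnit _ h]
    simp only [Matrix.zero_apply, abs_zero, Finset.sum_const_zero]
    exact hM_pos.le
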